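/- Let ι be a type, and for each i ∈ ι let H_i and K_i be complex Hilbert spaces and let L_i be a densely defined (possibly unbounded) linear operator from H_i to K_i. Let T be the block-diagonal operator from ⊕₂ H_i to ⊕₂ K_i with domain D(T) = { x : x_i ∈ D(L_i) for all i, (L_i x_i)_i ∈ ⊕₂ K_i } and (Tx)_i = L_i x_i (so T is densely defined). Then the Hilbert-space adjoint T* of T is the block-diagonal operator of the adjoints L_i*: D(T*) = { y ∈ ⊕₂ K_i : y_i ∈ D(L_i*) for all i, and (L_i* y_i)_i ∈ ⊕₂ H_i } and (T* y)_i = L_i* y_i for all y ∈ D(T*). -/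

import Mathlib

open MeasureTheory

noncomputable section

open scoped LinearPMap

local notation "⟪" x ", " y "⟫" => @inner ℂ _ _ x y

/-- Characterization of the graph of the adjoint of a densely defined operator. -/
theorem mem_adjoint_graph_iff' {E F : Type*}
    [NormedAddCommGroup E] [InnerProductSpace ℂ E] [CompleteSpace E]
    [NormedAddCommGroup F] [InnerProductSpace ℂ F]
    (S : E →ₗ.[ℂ] F) (hS : Dense (S.domain : Set E)) (y : F) (z : E) :
    (y, z) ∈ S.adjoint.graph ↔ ∀ x : S.domain, ⟪z, (x : E)⟫ = ⟪y, S x⟫ := by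
  constructor
  · intro h x
    rw [LinearPMap.mem_graph_iff] at h
    obtain ⟨y', hy', hz⟩ := h
    have h1 : (y' : F) = y := hy'
    have h2 : S.adjoint y' = z := hz
    rw [← h1, ← h2]
    exact LinearPMap.adjoint_isFormalAdjoint hS y' x
  · intro h
    have hy : y ∈ S.adjoint.domain :=
      LinearPMap.mem_adjoint_domain_of_exists y ⟨z, h⟩
    have : S.adjoint ⟨y, hy⟩ = z := LinearPMap.adjoint_apply_eq hS ⟨y, hy⟩ h
    rw [LinearPMap.mem_graph_iff]
    exact ⟨⟨y, hy⟩, rfl, this⟩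

theorem lp_single_sub {ι : Type*} [DecidableEq ι] (G : ι → Type*)
    [∀ i, NormedAddCommGroup (G i)]
    (p : ENNReal) (i : ι) (a b : G i) :
    lp.single p i (a - b) = lp.single p i a - lp.single p i b := by
  refine lp.ext (funext fun j => ?_)
  by_cases h : j = i
  · subst h
    simp [lp.single_apply_self]
  · simp [lp.single_apply_ne p i _ h]

theorem lp_norm_single2 {ι : Type*} [DecidableEq ι] (G : ι → Type*)
    [∀ i, NormedAddCommGroup (G i)]
    (i : ι) (a : G i) : ‖lp.single (E := G) 2 i a‖ = ‖a‖ := by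
  have hp : (0 : ENNReal) < 2 := by norm_num
  exact lp.norm_single (E := G) hp i a

/-- The Hilbert-space adjoint of the block-diagonal densely defined operator `T = ⊕ L_i`
on the `ℓ²`-direct sum of Hilbert spaces, characterized by its graph
`(x, y) ∈ G(T) ↔ ∀ i, (x_i, y_i) ∈ G(L_i)`, is the block-diagonal operator of the
adjoints: `(y, z) ∈ G(T†) ↔ ∀ i, (y_i, z_i) ∈ G(L_i†)`, i.e.
`D(T†) = { y : y_i ∈ D(L_i†) for all i, (L_i† y_i)_i ∈ ⊕₂ H_i }` and `(T† y)_i = L_i† y_i`. -/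
theorem blockDiag_adjoint
    {ι : Type*} (H K : ι → Type*)
    [∀ i, NormedAddCommGroup (H i)] [∀ i, InnerProductSpace ℂ (H i)]
    [∀ i, CompleteSpace (H i)]
    [∀ i, NormedAddCommGroup (K i)] [∀ i, InnerProductSpace ℂ (K i)]
    [∀ i, CompleteSpace (K i)]
    (L : ∀ i, H i →ₗ.[ℂ] K i)
    (hL : ∀ i, Dense ((L i).domain : Set (H i)))
    (T : lp H 2 →ₗ.[ℂ] lp K 2)
    (hT : ∀ (x : lp H 2) (y : lp K 2),
      (x, y) ∈ T.graph ↔ ∀ i, (x i, y i) ∈ (L i).graph) :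
    ∀ (y : lp K 2) (z : lp H 2),
      (y, z) ∈ T.adjoint.graph ↔ ∀ i, (y i, z i) ∈ (L i).adjoint.graph := by
  classical
  -- singles of domain elements are in `T.domain`
  have hsingle : ∀ (i : ι) (u : (L i).domain),
      (lp.single 2 i (u : H i), lp.single 2 i ((L i) u)) ∈ T.graph := by
    intro i u
    rw [hT]
    intro j
    by_cases h : j = i
    · subst h
      rw [lp.single_apply_self, lp.single_apply_self]
      exact (L j).mem_graph u
    · rw [lp.single_apply_ne 2 i _ h, lp.single_apply_ne 2 i _ h]
      exact (L j).graph.zero_mem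
  have hsingle_dom : ∀ (i : ι) (u : (L i).domain),
      lp.single 2 i (u : H i) ∈ T.domain := by
    intro i u
    exact LinearPMap.mem_domain_iff.mpr ⟨_, hsingle i u⟩
  -- density of `T.domain`
  have hdense : Dense (T.domain : Set (lp H 2)) := by
    rw [Submodule.dense_iff_topologicalClosure_eq_top]
    have hsingle_cl : ∀ (i : ι) (v : H i),
        lp.single 2 i v ∈ T.domain.topologicalClosure := by
      intro i v
      have hv : v ∈ closure ((L i).domain : Set (H i)) := (hL i) v
      rw [Metric.mem_closure_iff] at hv
      refine Metric.mem_closure_iff.mpr fun ε hε => ?_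
      obtain ⟨u, hu, hdist⟩ := hv ε hε
      refine ⟨lp.single 2 i u, hsingle_dom i ⟨u, hu⟩, ?_⟩
      rw [dist_eq_norm, ← lp_single_sub, lp_norm_single2, ← dist_eq_norm]
      exact hdist
    rw [eq_top_iff]
    intro f _
    have hf : HasSum (fun i : ι => lp.single 2 i (f i)) f :=
      lp.hasSum_single (by norm_num) f
    have hcl : IsClosed (T.domain.topologicalClosure : Set (lp H 2)) :=
      Submodule.isClosed_topologicalClosure _
    exact hcl.mem_of_tendsto hf
      (Filter.Eventually.of_forall fun s => Submodule.sum_mem _ fun i _ => hsingle_cl i (f i))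
  intro y z
  rw [mem_adjoint_graph_iff' T hdense]
  constructor
  · intro h i
    rw [mem_adjoint_graph_iff' (L i) (hL i)]
    intro u
    have hx : lp.single 2 i (u : H i) ∈ T.domain := hsingle_dom i u
    have hval : T ⟨_, hx⟩ = lp.single 2 i ((L i) u) :=
      T.mem_graph_snd_inj (T.mem_graph ⟨_, hx⟩) (hsingle i u) rfl
    have := h ⟨_, hx⟩
    rw [hval] at this
    rw [lp.inner_single_right, lp.inner_single_right] at this
    exact this
  · intro h x
    have hx : ∀ i, (((x : lp H 2) i, (T x) i)) ∈ (L i).graph :=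
      (hT _ _).mp (T.mem_graph x)
    have key : ∀ i, ⟪z i, (x : lp H 2) i⟫ = ⟪y i, (T x) i⟫ := by
      intro i
      obtain ⟨u, hu1, hu2⟩ := (L i).mem_graph_iff.mp (hx i)
      have hu1' : (u : H i) = (x : lp H 2) i := hu1
      have hu2' : (L i) u = (T x : lp K 2) i := hu2
      rw [← hu1', ← hu2']
      exact (mem_adjoint_graph_iff' (L i) (hL i) (y i) (z i)).mp (h i) u
    calc ⟪z, (x : lp H 2)⟫ = ∑' i, ⟪z i, (x : lp H 2) i⟫ := lp.inner_eq_tsum _ _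
      _ = ∑' i, ⟪y i, (T x) i⟫ := by simp_rw [key]
      _ = ⟪y, T x⟫ := (lp.inner_eq_tsum _ _).symm
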